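/- Suppose ⊛ : {0,1}×{0,1} → {0,1} is not monotone (with respect to the order 0 < 1 componentwise). Then the tensor operator 𝒜 ⊛ ℬ does not weakly preserve dominated convexity: there exist nonempty dominated convex families 𝒜, ℬ ⊆ 𝒫(X) (for some finite X) such that 𝒜 ⊛ ℬ is nonempty and not dominated. -/
import Mathlib


open Set

/-- A family of sets is convex if it is closed under set-theoretic betweenness. -/
def IsConvexFam {X : Type*} (𝒜 : Set (Set X)) : Prop :=
  ∀ S ∈ 𝒜, ∀ T ∈ 𝒜, ∀ C : Set X, S ⊆ C → C ⊆ T → C ∈ 𝒜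

/-- A family is dominated if its union belongs to it. -/
def IsDominatedFam {X : Type*} (𝒜 : Set (Set X)) : Prop := ⋃₀ 𝒜 ∈ 𝒜

/-- A family is supported if it is nonempty and its intersection belongs to it. -/
def IsSupportedFam {X : Type*} (𝒜 : Set (Set X)) : Prop := 𝒜.Nonempty ∧ ⋂₀ 𝒜 ∈ 𝒜

/-- A family is an interval if it equals `[A,B] = {C | A ⊆ C ⊆ B}` for some `A ⊆ B`. -/
def IsIntervalFam {X : Type*} (𝒜 : Set (Set X)) : Prop :=
  ∃ A B : Set X, A ⊆ B ∧ 𝒜 = Set.Icc A B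

/-- `𝒢` dominates `𝒜` if there are dominated convex families `𝒟 G ⊆ 𝒜` (`G ∈ 𝒢`)
with `⋃ G ∈ 𝒢, 𝒟 G = 𝒜` and `⋃₀ (𝒟 G) = G`. -/
def DominatesFam {X : Type*} (𝒢 𝒜 : Set (Set X)) : Prop :=
  𝒢 ⊆ 𝒜 ∧ ∃ 𝒟 : Set X → Set (Set X),
    (∀ G ∈ 𝒢, 𝒟 G ⊆ 𝒜 ∧ IsConvexFam (𝒟 G) ∧ IsDominatedFam (𝒟 G) ∧ ⋃₀ (𝒟 G) = G) ∧
    (⋃ G ∈ 𝒢, 𝒟 G) = 𝒜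

/-- `𝒦` supports `𝒜` if there are supported convex families `𝒮 K ⊆ 𝒜` (`K ∈ 𝒦`)
with `⋃ K ∈ 𝒦, 𝒮 K = 𝒜` and `⋂₀ (𝒮 K) = K`. -/
def SupportsFam {X : Type*} (𝒦 𝒜 : Set (Set X)) : Prop :=
  𝒦 ⊆ 𝒜 ∧ ∃ 𝒮 : Set X → Set (Set X),
    (∀ K ∈ 𝒦, 𝒮 K ⊆ 𝒜 ∧ IsConvexFam (𝒮 K) ∧ IsSupportedFam (𝒮 K) ∧ ⋂₀ (𝒮 K) = K) ∧
    (⋃ K ∈ 𝒦, 𝒮 K) = 𝒜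

/-- The upper dimension: the minimal cardinality of a dominating subfamily. -/
noncomputable def upperDim {X : Type*} (𝒜 : Set (Set X)) : ℕ∞ :=
  sInf {n : ℕ∞ | ∃ 𝒢 : Set (Set X), DominatesFam 𝒢 𝒜 ∧ 𝒢.encard = n}

/-- The dual upper dimension: the minimal cardinality of a supporting subfamily. -/
noncomputable def dualDim {X : Type*} (𝒜 : Set (Set X)) : ℕ∞ :=
  sInf {n : ℕ∞ | ∃ 𝒦 : Set (Set X), SupportsFam 𝒦 𝒜 ∧ 𝒦.encard = n}

/-- The cylindrical dimension: the minimal number of intervals whose union is `𝒜`. -/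
noncomputable def cylDim {X : Type*} (𝒜 : Set (Set X)) : ℕ∞ :=
  sInf {n : ℕ∞ | ∃ 𝕀 : Set (Set (Set X)),
    (∀ J ∈ 𝕀, IsIntervalFam J) ∧ ⋃₀ 𝕀 = 𝒜 ∧ 𝕀.encard = n}

open Classical in
noncomputable def chiFun {X : Type*} (A : Set X) (x : X) : Bool := decide (x ∈ A)

/-- The set-theoretic operation corresponding to a binary operation on `{0,1}`. -/
noncomputable def setOp {X : Type*} (op : Bool → Bool → Bool) (A B : Set X) : Set X :=
  {x | op (chiFun A x) (chiFun B x) = true}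

/-- The tensor operation on families corresponding to a binary operation on `{0,1}`. -/
noncomputable def tensorFam {X : Type*} (op : Bool → Bool → Bool)
    (𝒜 ℬ : Set (Set X)) : Set (Set X) :=
  Set.image2 (setOp op) 𝒜 ℬ

/-- The convex shadow of `A` in `𝒜`. -/
def convexShadow {X : Type*} (𝒜 : Set (Set X)) (A : Set X) : Set (Set X) :=
  {B | B ⊆ A ∧ Set.Icc B A ⊆ 𝒜}

/-- Domain of a relation. -/
def relDom {X Y : Type*} (R : Set (X × Y)) : Set X := {x | ∃ y, (x, y) ∈ R}

/-- Range of a relation. -/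
def relRg {X Y : Type*} (R : Set (X × Y)) : Set Y := {y | ∃ x, (x, y) ∈ R}

/-- The family of (partial) functions from `X` to `Y`, as sets of pairs. -/
def partialFunFam (X Y : Type*) : Set (Set (X × Y)) :=
  {f | ∀ x y y', (x, y) ∈ f → (x, y') ∈ f → y = y'}

/-- The family of relations on `X` with disjoint domain and range. -/
def exclFam (X : Type*) : Set (Set (X × X)) :=
  {R | relDom R ∩ relRg R = ∅}

/-- The family of relations on `X` whose domain is included in their range. -/
def inclFam (X : Type*) : Set (Set (X × X)) :=
  {R | relDom R ⊆ relRg R}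

/-- The family of anonymous relations: every point of the domain has two distinct images. -/
def anonFam (X Y : Type*) : Set (Set (X × Y)) :=
  {R | ∀ x ∈ relDom R, ∃ y y' : Y, y ≠ y' ∧ (x, y) ∈ R ∧ (x, y') ∈ R}

/-- The family of rectangles `A × B`. -/
def rectFam (X Y : Type*) : Set (Set (X × Y)) :=
  {P | ∃ (A : Set X) (B : Set Y), P = A ×ˢ B}

/-- General tensor disjunction of an indexed family of families of sets. -/
def gTensorDisj {ι X : Type*} (𝒜 : ι → Set (Set X)) : Set (Set X) :=
  {U | ∃ f : ι → Set X, (∀ i, f i ∈ 𝒜 i) ∧ U = ⋃ i, f i}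

/-- The Kripke operator associated to a relation `ℛ ⊆ 𝒫(Y) × 𝒫(X)^n`. -/
def kripkeOp {X Y : Type*} {n : ℕ} (ℛ : Set (Set Y × (Fin n → Set X)))
    (𝒜 : Fin n → Set (Set X)) : Set (Set Y) :=
  {B | ∃ A : Fin n → Set X, (∀ i, A i ∈ 𝒜 i) ∧ (B, A) ∈ ℛ}

lemma tensorFam_swap {X : Type*} (op : Bool → Bool → Bool) (𝒜 ℬ : Set (Set X)) :
    tensorFam op 𝒜 ℬ = tensorFam (fun a b => op b a) ℬ 𝒜 := by
  unfold tensorFam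
  rw [Set.image2_swap]
  rfl

lemma chiFun_eq_true {X : Type*} (A : Set X) (x : X) : chiFun A x = true ↔ x ∈ A := by
  simp [chiFun]

lemma helper8 (op : Bool → Bool → Bool) (c : Bool)
    (h1 : op false c = true) (h2 : op true c = false) :
    ∃ (X : Type) (_ : Finite X) (𝒜 ℬ : Set (Set X)),
      𝒜.Nonempty ∧ ℬ.Nonempty ∧
      IsDominatedFam 𝒜 ∧ IsConvexFam 𝒜 ∧
      IsDominatedFam ℬ ∧ IsConvexFam ℬ ∧
      (tensorFam op 𝒜 ℬ).Nonempty ∧ ¬ IsDominatedFam (tensorFam op 𝒜 ℬ) := by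
  -- key: setOp op S C = Sᶜ
  have key : ∀ S : Set Bool, setOp op S {_x : Bool | c = true} = Sᶜ := by
    intro S
    ext x
    simp only [setOp, mem_setOf_eq, mem_compl_iff]
    have hc : chiFun {_x : Bool | c = true} x = c := by
      cases c
      · rw [Bool.eq_false_iff, Ne, chiFun_eq_true]
        simp
      · rw [chiFun_eq_true]
        show (true = true); rfl
    rw [hc]
    by_cases hx : x ∈ S
    · rw [(chiFun_eq_true S x).mpr hx, h2]
      simp [hx]
    · have hfx : chiFun S x = false := by
        rw [Bool.eq_false_iff, Ne, chiFun_eq_true]; exact hx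
      rw [hfx, h1]
      simp [hx]
  have htens : tensorFam op {S : Set Bool | S.Nonempty} {{_x : Bool | c = true}}
      = {T : Set Bool | T ≠ univ} := by
    ext T
    constructor
    · rintro ⟨S, hS, B, hB, rfl⟩
      simp only [mem_singleton_iff] at hB; subst hB
      rw [key]
      intro h
      rcases hS with ⟨x, hx⟩
      have : x ∈ (Sᶜ : Set Bool) := h ▸ trivial
      exact this hx
    · intro hT
      refine ⟨Tᶜ, ?_, _, rfl, by rw [key, compl_compl]⟩
      rcases (ne_univ_iff_exists_notMem T).mp hT with ⟨x, hx⟩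
      exact ⟨x, hx⟩
  refine ⟨Bool, inferInstance, {S | S.Nonempty}, {{_x : Bool | c = true}},
    ⟨univ, univ_nonempty⟩, ⟨_, rfl⟩, ?_, ?_, ?_, ?_, ?_, ?_⟩
  · -- 𝒜 dominated
    show (⋃₀ {S : Set Bool | S.Nonempty}).Nonempty
    exact ⟨true, univ, univ_nonempty, trivial⟩
  · -- 𝒜 convex
    intro S hS T _ D hSD _
    exact hS.mono hSD
  · -- ℬ dominated
    show ⋃₀ {{_x : Bool | c = true}} ∈ ({{_x : Bool | c = true}} : Set (Set Bool))
    rw [sUnion_singleton]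
    rfl
  · -- ℬ convex
    intro S hS T hT D hSD hDT
    simp only [mem_singleton_iff] at hS hT ⊢
    subst hS; subst hT
    exact le_antisymm hDT hSD
  · rw [htens]
    exact ⟨∅, empty_ne_univ⟩
  · intro hdom
    unfold IsDominatedFam at hdom
    rw [htens] at hdom
    have hU : ⋃₀ {T : Set Bool | T ≠ univ} = univ := by
      apply eq_univ_of_forall
      intro x
      refine ⟨{x}, ?_, rfl⟩
      intro h
      have hmem : (!x) ∈ ({x} : Set Bool) := h ▸ trivial
      exact Bool.not_ne_self x (mem_singleton_iff.mp hmem)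
    rw [hU] at hdom
    exact hdom rfl

theorem stmt8 (op : Bool → Bool → Bool)
    (hmono : ¬ ∀ a a' b b' : Bool, a ≤ a' → b ≤ b' → op a b ≤ op a' b') :
    ∃ (X : Type) (_ : Finite X) (𝒜 ℬ : Set (Set X)),
      𝒜.Nonempty ∧ ℬ.Nonempty ∧
      IsDominatedFam 𝒜 ∧ IsConvexFam 𝒜 ∧
      IsDominatedFam ℬ ∧ IsConvexFam ℬ ∧
      (tensorFam op 𝒜 ℬ).Nonempty ∧ ¬ IsDominatedFam (tensorFam op 𝒜 ℬ) := by
  push_neg at hmono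
  obtain ⟨a, a', b, b', haa, hbb, hop⟩ := hmono
  obtain ⟨hfalse, htrue⟩ := Bool.lt_iff.mp hop
  by_cases h5 : op a' b = true
  · -- non-monotone in second argument at a'
    have hbne : b ≠ b' := by
      intro h; rw [h, hfalse] at h5; exact Bool.noConfusion h5
    obtain ⟨hb, hb'⟩ := Bool.lt_iff.mp (lt_of_le_of_ne hbb hbne)
    subst hb; subst hb'
    obtain ⟨X, hX, 𝒜, ℬ, hAne, hBne, hAd, hAc, hBd, hBc, htn, htd⟩ :=
      helper8 (fun u v => op v u) a' h5 hfalse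
    refine ⟨X, hX, ℬ, 𝒜, hBne, hAne, hBd, hBc, hAd, hAc, ?_, ?_⟩ <;>
      rw [tensorFam_swap]
    · exact htn
    · exact htd
  · -- non-monotone in first argument at b
    have hfa : op a' b = false := by simpa using h5
    have hane : a ≠ a' := by
      intro h; rw [h, hfa] at htrue; exact Bool.noConfusion htrue
    obtain ⟨ha, ha'⟩ := Bool.lt_iff.mp (lt_of_le_of_ne haa hane)
    subst ha; subst ha'
    exact helper8 op b htrue hfa
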